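/- Let (R, m) be a Noetherian local ring, M a finitely generated R-module, and p_1, p_2, …, p_ℓ ∈ Spec R finitely many prime ideals. If tr_R(M) is not contained in p_1 ∪ p_2 ∪ … ∪ p_ℓ, then there exists a single homomorphism f ∈ Hom_R(M, R) such that Im f is not contained in p_1 ∪ p_2 ∪ … ∪ p_ℓ. -/

import Mathlib

/-- The trace ideal `tr_R(M) = Σ_{f ∈ Hom_R(M,R)} Im f`. -/
noncomputable def traceIdeal (R M : Type*) [CommRing R] [AddCommGroup M] [Module R M] : Ideal R :=
  ⨆ f : M →ₗ[R] R, LinearMap.range f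

/-- Let `(R, m)` be a Noetherian local ring, `M` a finitely generated
`R`-module, and `p₁, …, p_ℓ` finitely many prime ideals of `R`. If `tr_R(M)` is not contained
in `p₁ ∪ ⋯ ∪ p_ℓ`, then there exists a single homomorphism `f : M → R` whose image is not
contained in `p₁ ∪ ⋯ ∪ p_ℓ`. -/
theorem stmt2 (R M : Type*) [CommRing R] [IsNoetherianRing R] [IsLocalRing R]
    [AddCommGroup M] [Module R M] [Module.Finite R M]
    (ℓ : ℕ) (p : Fin ℓ → Ideal R) (hp : ∀ i, (p i).IsPrime)
    (h : ¬ ((traceIdeal R M : Set R) ⊆ ⋃ i, (p i : Set R))) :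
    ∃ f : M →ₗ[R] R, ¬ ((LinearMap.range f : Set R) ⊆ ⋃ i, (p i : Set R)) := by
  classical
  rcases Nat.eq_zero_or_pos ℓ with hℓ | hℓ
  · subst hℓ
    refine ⟨0, fun hsub => ?_⟩
    have : (0 : R) ∈ ⋃ i : Fin 0, (p i : Set R) :=
      hsub (by exact (LinearMap.range (0 : M →ₗ[R] R)).zero_mem)
    simp at this
  -- extract an element of the trace ideal avoiding all primes
  rw [Set.not_subset] at h
  obtain ⟨x, hxtr, hxp⟩ := h
  simp only [Set.mem_iUnion, not_exists, SetLike.mem_coe] at hxp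
  have hxtr' : x ∈ traceIdeal R M := hxtr
  set S : Finset (Ideal R) := Finset.univ.image p with hS
  set T : Finset (Ideal R) := S.filter (fun P => ∀ Q ∈ S, P ≤ Q → P = Q) with hT
  -- every prime in S is below a maximal one in T
  have hA : ∀ P ∈ S, ∃ Q ∈ T, P ≤ Q := by
    intro P hP
    have hne : (S.filter (fun Q => P ≤ Q)).Nonempty :=
      ⟨P, Finset.mem_filter.mpr ⟨hP, le_refl P⟩⟩
    obtain ⟨Q, hQ, hQmax⟩ := (S.filter (fun Q => P ≤ Q)).exists_maximal hne
    rw [Finset.mem_filter] at hQ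
    refine ⟨Q, ?_, hQ.2⟩
    rw [hT, Finset.mem_filter]
    refine ⟨hQ.1, fun Q' hQ' hle => ?_⟩
    by_contra hne'
    exact hne' (le_antisymm hle (hQmax (Finset.mem_filter.mpr ⟨hQ', hQ.2.trans hle⟩) hle))
  have hTS : ∀ P ∈ T, P ∈ S := fun P hP => (Finset.mem_filter.mp hP).1
  have hSprime : ∀ P ∈ S, P.IsPrime := by
    intro P hP
    obtain ⟨i, _, rfl⟩ := Finset.mem_image.mp hP
    exact hp i
  have hxS : ∀ P ∈ S, x ∉ P := by
    intro P hP
    obtain ⟨i, _, rfl⟩ := Finset.mem_image.mp hP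
    exact hxp i
  -- for each maximal prime, a map whose range avoids it
  have hF : ∀ P : Ideal R, ∃ (f : M →ₗ[R] R) (m : M), P ∈ T → f m ∉ P := by
    intro P
    by_cases hPT : P ∈ T
    · have h1 : ¬ traceIdeal R M ≤ P := fun hle => hxS P (hTS P hPT) (hle hxtr')
      have h2 : ¬ ∀ f : M →ₗ[R] R, LinearMap.range f ≤ P := by
        intro hall
        exact h1 (iSup_le hall)
      push_neg at h2
      obtain ⟨f, hf⟩ := h2
      obtain ⟨y, hy, hy'⟩ := SetLike.not_le_iff_exists.mp hf
      obtain ⟨m, rfl⟩ := hy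
      exact ⟨f, m, fun _ => hy'⟩
    · exact ⟨0, 0, fun hc => absurd hc hPT⟩
  choose F m hFm using hF
  -- separating elements between distinct maximal primes
  have hE : ∀ P Q : Ideal R, ∃ e : R, (P ∈ T ∧ Q ∈ T ∧ Q ≠ P) → e ∈ Q ∧ e ∉ P := by
    intro P Q
    by_cases hc : P ∈ T ∧ Q ∈ T ∧ Q ≠ P
    · obtain ⟨hP, hQ, hne⟩ := hc
      have hnle : ¬ Q ≤ P := by
        intro hle
        exact hne ((Finset.mem_filter.mp hQ).2 P (hTS P hP) hle)
      obtain ⟨e, he, he'⟩ := SetLike.not_le_iff_exists.mp hnle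
      exact ⟨e, fun _ => ⟨he, he'⟩⟩
    · exact ⟨0, fun hcc => absurd hcc hc⟩
  choose e he using hE
  set c : Ideal R → R := fun P => ∏ Q ∈ T.erase P, e P Q with hc
  have hcnot : ∀ P ∈ T, c P ∉ P := by
    intro P hP hmem
    have := hSprime P (hTS P hP)
    rw [hc] at hmem
    obtain ⟨Q, hQ, hQP⟩ := Ideal.IsPrime.prod_mem_iff.mp hmem
    rw [Finset.mem_erase] at hQ
    exact (he P Q ⟨hP, hQ.2, hQ.1⟩).2 hQP
  have hcmem : ∀ P ∈ T, ∀ Q ∈ T, Q ≠ P → c P ∈ Q := by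
    intro P hP Q hQ hne
    obtain ⟨d, hd⟩ := Finset.dvd_prod_of_mem (fun Q' => e P Q')
      (Finset.mem_erase.mpr ⟨hne, hQ⟩)
    rw [hc]
    simp only
    rw [hd]
    exact Ideal.mul_mem_right _ _ (he P Q ⟨hP, hQ, hne⟩).1
  set f : M →ₗ[R] R := ∑ P ∈ T, c P • F P with hf
  have key : ∀ P ∈ T, f (m P) ∉ P := by
    intro P hP hmem
    have hval : f (m P) = ∑ Q ∈ T, c Q * F Q (m P) := by
      rw [hf]
      simp [LinearMap.sum_apply, LinearMap.smul_apply, smul_eq_mul]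
    have hsplit : f (m P) = c P * F P (m P) + ∑ Q ∈ T.erase P, c Q * F Q (m P) := by
      rw [hval, ← Finset.add_sum_erase T _ hP]
    have hrest : ∑ Q ∈ T.erase P, c Q * F Q (m P) ∈ P := by
      refine Ideal.sum_mem _ fun Q hQ => ?_
      rw [Finset.mem_erase] at hQ
      exact Ideal.mul_mem_right _ _ (hcmem Q hQ.2 P hP (Ne.symm hQ.1))
    have hfirst : c P * F P (m P) ∈ P := by
      have : c P * F P (m P) = f (m P) - ∑ Q ∈ T.erase P, c Q * F Q (m P) := by
        rw [hsplit]; ring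
      rw [this]
      exact Ideal.sub_mem _ hmem hrest
    have hprime := hSprime P (hTS P hP)
    rcases hprime.mem_or_mem hfirst with h1 | h2
    · exact hcnot P hP h1
    · exact hFm P hP h2
  refine ⟨f, fun hsub => ?_⟩
  have hsub' : ((LinearMap.range f : Ideal R) : Set R) ⊆
      ⋃ i ∈ ((Finset.univ : Finset (Fin ℓ)) : Set (Fin ℓ)), (p i : Set R) := by
    simpa using hsub
  obtain ⟨i, _, hle⟩ := (Ideal.subset_union_prime (⟨0, hℓ⟩ : Fin ℓ) ⟨0, hℓ⟩
    (fun i _ _ _ => hp i)).mp hsub'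
  have hpiS : p i ∈ S := Finset.mem_image.mpr ⟨i, Finset.mem_univ i, rfl⟩
  obtain ⟨Q, hQ, hPQ⟩ := hA (p i) hpiS
  exact key Q hQ (hle.trans hPQ (LinearMap.mem_range_self f (m Q)))
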